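/- Let X₁, X₂ be Hilbert spaces and T : X₁ → X₂ a bounded linear operator. Then Gr(T) + Gr(T*)† = X₁ ⊕ X₂ if and only if I − TT* : X₂ → X₂ is surjective, where Gr(T*)† := {(T*y, y) : y ∈ X₂} = Gr(−T)^⊥. More precisely, Gr(T) + Gr(T*)† = Gr(T) ⊕ ({0} × range(I − TT*)). -/

import Mathlib

theorem stmt_19 {E : Type*} [NormedAddCommGroup E] [InnerProductSpace ℝ E] [CompleteSpace E]
    {F : Type*} [NormedAddCommGroup F] [InnerProductSpace ℝ F] [CompleteSpace F]
    (T : E →L[ℝ] F) :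
    let D : Submodule ℝ (E × F) :=
      LinearMap.range (((ContinuousLinearMap.adjoint T : F →ₗ[ℝ] E)).prod (LinearMap.id))
    let R : Submodule ℝ F :=
      LinearMap.range ((ContinuousLinearMap.id ℝ F - T ∘L ContinuousLinearMap.adjoint T : F →L[ℝ] F) : F →ₗ[ℝ] F)
    LinearMap.graph (T : E →ₗ[ℝ] F) ⊔ D =
        LinearMap.graph (T : E →ₗ[ℝ] F) ⊔ Submodule.prod ⊥ R ∧
      LinearMap.graph (T : E →ₗ[ℝ] F) ⊓ Submodule.prod ⊥ R = ⊥ ∧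
      (LinearMap.graph (T : E →ₗ[ℝ] F) ⊔ D = ⊤ ↔
        Function.Surjective (ContinuousLinearMap.id ℝ F - T ∘L ContinuousLinearMap.adjoint T)) := by
  intro D R
  set S := ContinuousLinearMap.adjoint T with hS
  have hsup : LinearMap.graph (T : E →ₗ[ℝ] F) ⊔ D =
      LinearMap.graph (T : E →ₗ[ℝ] F) ⊔ Submodule.prod ⊥ R := by
    apply le_antisymm
    · refine sup_le le_sup_left ?_
      rintro ⟨a, b⟩ ⟨y, hy⟩
      simp only [LinearMap.prod_apply, Function.prod, LinearMap.id_apply, Prod.mk.injEq] at hy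
      rw [Submodule.mem_sup]
      refine ⟨(S y, T (S y)), ?_, (0, y - T (S y)), ?_, ?_⟩
      · exact (LinearMap.mem_graph_iff _ _).2 rfl
      · refine Submodule.mem_prod.2 ⟨(Submodule.mem_bot _).2 rfl, ⟨y, ?_⟩⟩
        simp [hS]
      · rw [← hy.1, ← hy.2]; simp [hS]
    · refine sup_le le_sup_left ?_
      rintro ⟨a, b⟩ hab
      obtain ⟨ha, hb⟩ := Submodule.mem_prod.1 hab
      have ha' : a = 0 := ha
      obtain ⟨y, hy⟩ := hb
      simp only [ContinuousLinearMap.coe_sub', Pi.sub_apply, ContinuousLinearMap.coe_id',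
        id_eq, ContinuousLinearMap.coe_comp', Function.comp_apply] at hy
      have hy' : y - T (S y) = b := hy
      rw [Submodule.mem_sup]
      refine ⟨(-S y, T (-S y)), (LinearMap.mem_graph_iff _ _).2 rfl, (S y, y), ⟨y, rfl⟩, ?_⟩
      simp only [Prod.mk_add_mk, Prod.mk.injEq]
      refine ⟨by rw [ha']; abel, ?_⟩
      rw [← hy', map_neg]; abel
  refine ⟨hsup, ?_, ?_⟩
  · rw [eq_bot_iff]
    rintro ⟨a, b⟩ ⟨hg, hp⟩
    obtain ⟨ha, -⟩ := Submodule.mem_prod.1 hp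
    have ha' : a = 0 := ha
    have hg' : b = T a := (LinearMap.mem_graph_iff _ _).1 hg
    simp only [Submodule.mem_bot, Prod.mk_eq_zero]
    exact ⟨ha', by rw [hg', ha']; simp⟩
  · rw [hsup]
    constructor
    · intro h z
      have : ((0 : E), z) ∈ (⊤ : Submodule ℝ (E × F)) := trivial
      rw [← h, Submodule.mem_sup] at this
      obtain ⟨⟨a, b⟩, hg, ⟨c, d⟩, hp, heq⟩ := this
      have hg' : b = T a := (LinearMap.mem_graph_iff _ _).1 hg
      obtain ⟨hc, hd⟩ := Submodule.mem_prod.1 hp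
      have hc' : c = 0 := hc
      obtain ⟨y, hy⟩ := hd
      have hy' : y - T (S y) = d := hy
      simp only [Prod.mk_add_mk, Prod.mk.injEq] at heq
      have ha0 : a = 0 := by
        have h1 := heq.1; rw [hc', add_zero] at h1; exact h1
      refine ⟨y, ?_⟩
      have : (ContinuousLinearMap.id ℝ F - T ∘L S) y = y - T (S y) := rfl
      rw [this, hy', ← heq.2, hg', ha0]
      simp
    · intro hsurj
      rw [eq_top_iff]
      rintro ⟨a, b⟩ -
      obtain ⟨y, hy⟩ := hsurj (b - T a)
      rw [Submodule.mem_sup]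
      exact ⟨(a, T a), (LinearMap.mem_graph_iff _ _).2 rfl, (0, b - T a),
        Submodule.mem_prod.2 ⟨(Submodule.mem_bot _).2 rfl, ⟨y, hy⟩⟩, by simp⟩
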